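/- (Exponential LDQ-Res lower bound for ts-LQParity) There exist constants c > 0 and ε > 0 such that for all N ≥ 2, every LDQ-Res (that is, LDQ(D^trv)-Res) refutation of ts-LQParity(N) has size at least c·2^(N^ε). -/

import Mathlib

/-! ## Literals, clauses, DQBFs -/

structure Lit (V : Type) where
  var : V
  pos : Bool
deriving DecidableEq

def Lit.negate {V : Type} (l : Lit V) : Lit V := ⟨l.var, !l.pos⟩

abbrev Clause (V : Type) [DecidableEq V] : Type := Finset (Lit V)

/-- An S-form DQBF: universal variables `U`, existential variables `E`,
dependency sets `dep` (only meaningful on `E`), and a CNF matrix. -/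
structure DQBF (V : Type) [DecidableEq V] where
  U : Finset V
  E : Finset V
  dep : V → Finset V
  matrix : Finset (Clause V)

variable {V : Type} [DecidableEq V]

/-- Well-formedness of a DQBF. -/
def DQBF.WF (ψ : DQBF V) : Prop :=
  Disjoint ψ.U ψ.E ∧ (∀ x ∈ ψ.E, ψ.dep x ⊆ ψ.U) ∧
    ∀ C ∈ ψ.matrix, ∀ l ∈ C, l.var ∈ ψ.U ∪ ψ.E

/-- Dependency set with the convention `D_u = {u}` for universal variables. -/
def DQBF.depOf (ψ : DQBF V) (y : V) : Finset V := if y ∈ ψ.U then {y} else ψ.dep y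

/-! ## Semantics -/

def Clause.Sat (β : V → Bool) (C : Clause V) : Prop := ∃ l ∈ C, β l.var = l.pos

/-- A Skolem function set respects the dependency sets if the value of each
existential variable only depends on the assignment to its dependency set. -/
def DQBF.Respects (ψ : DQBF V) (f : V → (V → Bool) → Bool) : Prop :=
  ∀ x ∈ ψ.E, ∀ β γ : V → Bool, (∀ u ∈ ψ.dep x, β u = γ u) → f x β = f x γ

/-- The completed assignment `β ∪ f(β)`. -/
def DQBF.Completed (ψ : DQBF V) (f : V → (V → Bool) → Bool) (β : V → Bool) : V → Bool :=
  fun v => if v ∈ ψ.E then f v β else β v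

def DQBF.IsModel (ψ : DQBF V) (f : V → (V → Bool) → Bool) : Prop :=
  ψ.Respects f ∧ ∀ β : V → Bool, ∀ C ∈ ψ.matrix, Clause.Sat (ψ.Completed f β) C

def DQBF.IsTrue (ψ : DQBF V) : Prop := ∃ f, ψ.IsModel f

/-- Flip the value of variable `u` in an assignment. -/
def flipAt (u : V) (α : V → Bool) : V → Bool := fun w => if w = u then !(α w) else α w

/-- `(α, x, u)` is a dependency witness for the Skolem function set `f`. -/
def DepWitness (ψ : DQBF V) (f : V → (V → Bool) → Bool) (α : V → Bool) (x u : V) : Prop :=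
  f x α ≠ f x (flipAt u α)

/-! ## Resolution paths and dependency schemes -/

/-- The clauses of the matrix containing the literal `w`. -/
def DQBF.litClauses (ψ : DQBF V) (w : Lit V) : Finset (Clause V) :=
  ψ.matrix.filter fun C => w ∈ C

/-- `S_u`: the existential variables depending on `u`. -/
def DQBF.Sset (ψ : DQBF V) (u : V) : Finset V := ψ.E.filter fun x => u ∈ ψ.dep x

/-- `pathl^pu(w, ψ, χ, S)`: the least set of literals on `S`-variables reachable by a
`w`-pure resolution path starting from the clauses of `χ`. -/
inductive PathLPU (ψ : DQBF V) (w : Lit V) (χ : Finset (Clause V)) (S : Finset V) :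
    Lit V → Prop
  | base {C : Clause V} {l : Lit V} : C ∈ χ → l ∈ C → l.var ∈ S → PathLPU ψ w χ S l
  | step {p l : Lit V} {Ecl : Clause V} :
      PathLPU ψ w χ S p → Ecl ∈ ψ.matrix → p.negate ∈ Ecl → w.negate ∉ Ecl →
      l ∈ Ecl → l ≠ p.negate → l.var ∈ S → PathLPU ψ w χ S l

/-- `pathc^pu(w, ψ, χ, S)`: the corresponding set of reachable clauses. -/
inductive PathCPU (ψ : DQBF V) (w : Lit V) (χ : Finset (Clause V)) (S : Finset V) :
    Clause V → Prop
  | base {C : Clause V} : C ∈ χ → PathCPU ψ w χ S C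
  | step {p : Lit V} {Ecl : Clause V} :
      PathLPU ψ w χ S p → Ecl ∈ ψ.matrix → p.negate ∈ Ecl → w.negate ∉ Ecl →
      PathCPU ψ w χ S Ecl

/-- `pathl^rrs(ψ, χ, S)`: the analogous closure without the purity requirement. -/
inductive PathLRRS (ψ : DQBF V) (χ : Finset (Clause V)) (S : Finset V) : Lit V → Prop
  | base {C : Clause V} {l : Lit V} : C ∈ χ → l ∈ C → l.var ∈ S → PathLRRS ψ χ S l
  | step {p l : Lit V} {Ecl : Clause V} :
      PathLRRS ψ χ S p → Ecl ∈ ψ.matrix → p.negate ∈ Ecl →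
      l ∈ Ecl → l ≠ p.negate → l.var ∈ S → PathLRRS ψ χ S l

/-- `w ⤳ l` (pure path connection). -/
def ConnPU (ψ : DQBF V) (w l : Lit V) : Prop :=
  PathLPU ψ w (ψ.litClauses w) (ψ.Sset w.var) l

/-- `w ⤳ʳ l` (reflexive resolution path connection). -/
def ConnRRS (ψ : DQBF V) (w l : Lit V) : Prop :=
  PathLRRS ψ (ψ.litClauses w) (ψ.Sset w.var) l

/-- The pure universal dependency scheme `D^pu`. -/
def Dpu (ψ : DQBF V) (u x : V) : Prop :=
  u ∈ ψ.dep x ∧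
    ((ConnPU ψ ⟨u, true⟩ ⟨x, true⟩ ∧ ConnPU ψ ⟨u, false⟩ ⟨x, false⟩) ∨
      (ConnPU ψ ⟨u, false⟩ ⟨x, true⟩ ∧ ConnPU ψ ⟨u, true⟩ ⟨x, false⟩))

/-- The reflexive resolution path dependency scheme `D^rrs`. -/
def Drrs (ψ : DQBF V) (u x : V) : Prop :=
  u ∈ ψ.dep x ∧
    ((ConnRRS ψ ⟨u, true⟩ ⟨x, true⟩ ∧ ConnRRS ψ ⟨u, false⟩ ⟨x, false⟩) ∨
      (ConnRRS ψ ⟨u, false⟩ ⟨x, true⟩ ∧ ConnRRS ψ ⟨u, true⟩ ⟨x, false⟩))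

/-- The trivial dependency scheme `D^trv`. -/
def Dtrv (ψ : DQBF V) (u x : V) : Prop := u ∈ ψ.dep x

/-! ## LDQ(D)-Res -/

/-- Derivability of a clause in LDQ(D)-Res from the matrix of `ψ`, for a
dependency relation `D`. -/
inductive LDQDeriv (ψ : DQBF V) (D : V → V → Prop) : Clause V → Prop
  | ax {C : Clause V} : C ∈ ψ.matrix → LDQDeriv ψ D C
  | red {C : Clause V} {w : Lit V} :
      LDQDeriv ψ D (insert w C) → w.var ∈ ψ.U → w ∉ C →
      (∀ l ∈ C, l.var ∈ ψ.E → ¬ D w.var l.var) → LDQDeriv ψ D C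
  | res {Ec Fc : Clause V} {x : V} :
      x ∈ ψ.E →
      LDQDeriv ψ D (insert ⟨x, false⟩ Ec) → LDQDeriv ψ D (insert ⟨x, true⟩ Fc) →
      (⟨x, false⟩ : Lit V) ∉ Ec → (⟨x, true⟩ : Lit V) ∉ Fc →
      (∀ v ∈ Ec, v.var ∈ ψ.U → v.negate ∈ Fc → ¬ D v.var x) →
      LDQDeriv ψ D (Ec ∪ Fc)

/-- A single valid LDQ(D)-Res step, given the list of previously derived clauses. -/
def LDQStep (ψ : DQBF V) (D : V → V → Prop) (prev : List (Clause V)) (C : Clause V) : Prop :=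
  C ∈ ψ.matrix ∨
    (∃ w : Lit V, w.var ∈ ψ.U ∧ w ∉ C ∧ insert w C ∈ prev ∧
      ∀ l ∈ C, l.var ∈ ψ.E → ¬ D w.var l.var) ∨
    (∃ (x : V) (Ec Fc : Clause V), x ∈ ψ.E ∧ C = Ec ∪ Fc ∧
      (⟨x, false⟩ : Lit V) ∉ Ec ∧ (⟨x, true⟩ : Lit V) ∉ Fc ∧
      insert (⟨x, false⟩ : Lit V) Ec ∈ prev ∧ insert (⟨x, true⟩ : Lit V) Fc ∈ prev ∧
      ∀ v ∈ Ec, v.var ∈ ψ.U → v.negate ∈ Fc → ¬ D v.var x)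

/-- An LDQ(D)-Res proof: a list of clauses, each a valid step from the earlier ones. -/
def IsLDQProof (ψ : DQBF V) (D : V → V → Prop) (π : List (Clause V)) : Prop :=
  ∀ i : Fin π.length, LDQStep ψ D (π.take i.val) (π.get i)

def IsLDQRefutation (ψ : DQBF V) (D : V → V → Prop) (π : List (Clause V)) : Prop :=
  IsLDQProof ψ D π ∧ (∅ : Clause V) ∈ π

/-- A single valid Q-Res step. -/
def QResStep (ψ : DQBF V) (prev : List (Clause V)) (C : Clause V) : Prop :=
  C ∈ ψ.matrix ∨
    (∃ w : Lit V, w.var ∈ ψ.U ∧ w ∉ C ∧ w.negate ∉ C ∧ insert w C ∈ prev ∧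
      ∀ l ∈ C, l.var ∈ ψ.E → w.var ∉ ψ.dep l.var) ∨
    (∃ (x : V) (Ec Fc : Clause V), x ∈ ψ.E ∧ C = Ec ∪ Fc ∧
      (⟨x, false⟩ : Lit V) ∉ Ec ∧ (⟨x, true⟩ : Lit V) ∉ Fc ∧
      insert (⟨x, false⟩ : Lit V) Ec ∈ prev ∧ insert (⟨x, true⟩ : Lit V) Fc ∈ prev ∧
      ∀ v ∈ Ec, v.var ∈ ψ.U → v.negate ∉ Fc)

def IsQResProof (ψ : DQBF V) (π : List (Clause V)) : Prop :=
  ∀ i : Fin π.length, QResStep ψ (π.take i.val) (π.get i)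

def IsQResRefutation (ψ : DQBF V) (π : List (Clause V)) : Prop :=
  IsQResProof ψ π ∧ (∅ : Clause V) ∈ π

/-! ## QBFs: DQBFs with a linear quantifier prefix -/

structure QBF (V : Type) [DecidableEq V] extends DQBF V where
  ord : V → ℕ

/-- Well-formedness of a QBF: dependency sets are induced by the prefix order. -/
def QBF.WF (ψ : QBF V) : Prop :=
  ψ.toDQBF.WF ∧
    (∀ a ∈ ψ.U ∪ ψ.E, ∀ b ∈ ψ.U ∪ ψ.E, ψ.ord a = ψ.ord b → a = b) ∧
    ∀ x ∈ ψ.E, ∀ u, u ∈ ψ.dep x ↔ u ∈ ψ.U ∧ ψ.ord u < ψ.ord x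

/-! ## IndExt-QU-Res -/

/-- The clause `¬α` of negations of the literals of a partial assignment `α`. -/
def negAssign (α : Finset (Lit V)) : Clause V := α.image Lit.negate

/-- Size of a DQBF. -/
def DQBF.size (ψ : DQBF V) : ℕ := ψ.U.card + ψ.E.card + ∑ C ∈ ψ.matrix, (C.card + 1)

/-- IndExt-QU-Res derivations: from the DQBF `ψ0`, reach a (possibly extended)
prefix together with a set of derived clauses, in the given number of steps. -/
inductive IndExtDeriv (ψ0 : DQBF V) : DQBF V → Finset (Clause V) → ℕ → Prop
  | start : IndExtDeriv ψ0 ψ0 ψ0.matrix 0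
  | res {ψ : DQBF V} {Γ : Finset (Clause V)} {n : ℕ} {Ec Fc : Clause V} {x : V} :
      IndExtDeriv ψ0 ψ Γ n → x ∈ ψ.E →
      (⟨x, false⟩ : Lit V) ∉ Ec → (⟨x, true⟩ : Lit V) ∉ Fc →
      insert (⟨x, false⟩ : Lit V) Ec ∈ Γ → insert (⟨x, true⟩ : Lit V) Fc ∈ Γ →
      IndExtDeriv ψ0 ψ (insert (Ec ∪ Fc) Γ) (n + 1)
  | red {ψ : DQBF V} {Γ : Finset (Clause V)} {n : ℕ} {C : Clause V} {w : Lit V} :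
      IndExtDeriv ψ0 ψ Γ n → insert w C ∈ Γ → w.var ∈ ψ.U → w ∉ C → w.negate ∉ C →
      (∀ l ∈ C, l.var ∈ ψ.E → w.var ∉ ψ.dep l.var) →
      IndExtDeriv ψ0 ψ (insert C Γ) (n + 1)
  | ext {ψ : DQBF V} {Γ : Finset (Clause V)} {n : ℕ} (α : Finset (Lit V)) (y1 y2 v : V) :
      IndExtDeriv ψ0 ψ Γ n →
      (∀ a ∈ α, a.var ∈ ψ.U) → v ∉ ψ.U ∪ ψ.E → y1 ∈ ψ.U ∪ ψ.E → y2 ∈ ψ.U ∪ ψ.E →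
      IndExtDeriv ψ0
        ⟨ψ.U, insert v ψ.E,
          Function.update ψ.dep v ((ψ.depOf y1 ∪ ψ.depOf y2) \ α.image Lit.var), ψ.matrix⟩
        (insert (negAssign α ∪ ({⟨v, true⟩, ⟨y1, true⟩} : Clause V))
          (insert (negAssign α ∪ ({⟨v, true⟩, ⟨y2, true⟩} : Clause V))
            (insert (negAssign α ∪ ({⟨v, false⟩, ⟨y1, false⟩, ⟨y2, false⟩} : Clause V)) Γ)))
        (n + 1)
  | weakU {ψ : DQBF V} {Γ : Finset (Clause V)} {n : ℕ} (v : V) :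
      IndExtDeriv ψ0 ψ Γ n → v ∉ ψ.U ∪ ψ.E →
      IndExtDeriv ψ0 ⟨insert v ψ.U, ψ.E, ψ.dep, ψ.matrix⟩ Γ (n + 1)
  | weakE {ψ : DQBF V} {Γ : Finset (Clause V)} {n : ℕ} (v : V) (Dv : Finset V) :
      IndExtDeriv ψ0 ψ Γ n → v ∉ ψ.U ∪ ψ.E → Dv ⊆ ψ.U →
      IndExtDeriv ψ0 ⟨ψ.U, insert v ψ.E, Function.update ψ.dep v Dv, ψ.matrix⟩ Γ (n + 1)

/-- Substituting variables in a clause. -/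
def Clause.subst (σ : V → V) (C : Clause V) : Clause V :=
  C.image fun l => (⟨σ l.var, l.pos⟩ : Lit V)

/-! ## Unit propagation, outer variables, and DQRAT(D^pu) -/

/-- Literals derivable by unit propagation from a (possibly infinite) clause set. -/
inductive UPLit (Φ : Set (Clause V)) : Lit V → Prop
  | unit {C : Clause V} {l : Lit V} : C ∈ Φ → l ∈ C →
      (∀ l' ∈ C, l' ≠ l → UPLit Φ l'.negate) → UPLit Φ l

/-- `Φ ⊢₁ ⊥`: unit propagation derives a conflict. -/
def UPBot (Φ : Set (Clause V)) : Prop := ∃ C ∈ Φ, ∀ l ∈ C, UPLit Φ l.negate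

/-- The unit clauses negating the literals of `C`. -/
def negUnits (C : Clause V) : Set (Clause V) := {D | ∃ l ∈ C, D = ({l.negate} : Clause V)}

def DQBF.Inner (ψ : DQBF V) (u : V) : Set V := {y | y ∈ ψ.E ∧ u ∈ ψ.dep y}

/-- The set of outer variables of a variable. -/
def DQBF.Outer (ψ : DQBF V) (x : V) : Set V :=
  if x ∈ ψ.U then
    {x} ∪ ((↑(ψ.U ∪ ψ.E) : Set V) ∩ ⋂ z ∈ ψ.Inner x, {y | ψ.depOf y ⊆ ψ.dep z \ {x}})
  else {y | y ∈ ψ.U ∪ ψ.E ∧ ψ.depOf y ⊆ ψ.dep x}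

/-- `y ≲_Π x`. -/
def outerLe (ψ : DQBF V) (y x : V) : Prop := y ∈ ψ.Outer x

/-- `D_C`, the union of the dependency sets of the variables of a clause. -/
def depClause (ψ : DQBF V) (C : Clause V) : Finset V := C.biUnion fun l => ψ.depOf l.var

/-- The unit clauses used in the DQRAT side condition: outer literals of `D` negated. -/
def ratUnits (ψ : DQBF V) (D : Clause V) (l : Lit V) : Set (Clause V) :=
  {Dc | ∃ x ∈ D, x ≠ l.negate ∧ outerLe ψ x.var l.var ∧ Dc = ({x.negate} : Clause V)}

/-- DQRAT(D^pu) derivations: sequences of DQBFs, each obtained from the previous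
one by one of the rules ATA, Del, UR, DQRAT∃, DQRAT∀, BPM, D^pu. -/
inductive DQRATDeriv (ψ0 : DQBF V) : DQBF V → ℕ → Prop
  | start : DQRATDeriv ψ0 ψ0 0
  | ata {ψ : DQBF V} {n : ℕ} (C : Clause V) :
      DQRATDeriv ψ0 ψ n → UPBot ((↑ψ.matrix : Set (Clause V)) ∪ negUnits C) →
      DQRATDeriv ψ0 ⟨ψ.U, ψ.E, ψ.dep, insert C ψ.matrix⟩ (n + 1)
  | del {ψ : DQBF V} {n : ℕ} (C : Clause V) :
      DQRATDeriv ψ0 ψ n → C ∈ ψ.matrix →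
      DQRATDeriv ψ0 ⟨ψ.U, ψ.E, ψ.dep, ψ.matrix.erase C⟩ (n + 1)
  | ur {ψ : DQBF V} {n : ℕ} (C : Clause V) (l : Lit V) :
      DQRATDeriv ψ0 ψ n → insert l C ∈ ψ.matrix → l ∉ C → l.var ∈ ψ.U →
      l.var ∉ depClause ψ C →
      DQRATDeriv ψ0 ⟨ψ.U, ψ.E, ψ.dep, insert C (ψ.matrix.erase (insert l C))⟩ (n + 1)
  | ratE {ψ : DQBF V} {n : ℕ} (C : Clause V) (l : Lit V) :
      DQRATDeriv ψ0 ψ n → l.var ∈ ψ.E → l ∉ C →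
      (∀ D ∈ ψ.matrix, l.negate ∈ D →
        UPBot ((↑ψ.matrix : Set (Clause V)) ∪ negUnits (insert l C) ∪ ratUnits ψ D l)) →
      DQRATDeriv ψ0 ⟨ψ.U, ψ.E, ψ.dep, insert (insert l C) ψ.matrix⟩ (n + 1)
  | ratA {ψ : DQBF V} {n : ℕ} (C : Clause V) (l : Lit V) :
      DQRATDeriv ψ0 ψ n → l.var ∈ ψ.U → l ∉ C → insert l C ∈ ψ.matrix →
      (∀ D ∈ ψ.matrix, l.negate ∈ D →
        UPBot ((↑ψ.matrix : Set (Clause V)) ∪ negUnits C ∪ {({l} : Clause V)} ∪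
          ratUnits ψ D l)) →
      DQRATDeriv ψ0 ⟨ψ.U, ψ.E, ψ.dep, insert C (ψ.matrix.erase (insert l C))⟩ (n + 1)
  | bpm {ψ : DQBF V} {n : ℕ} (ψ' : DQBF V) :
      DQRATDeriv ψ0 ψ n → ψ.U ⊆ ψ'.U → ψ.E ⊆ ψ'.E → Disjoint ψ'.U ψ'.E →
      (∀ x ∈ ψ.E, ψ'.dep x = ψ.dep x) → (∀ x ∈ ψ'.E, ψ'.dep x ⊆ ψ'.U) →
      ψ'.matrix = ψ.matrix →
      DQRATDeriv ψ0 ψ' (n + 1)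
  | dpuStep {ψ : DQBF V} {n : ℕ} (ψ' : DQBF V) :
      DQRATDeriv ψ0 ψ n → ψ'.U = ψ.U → ψ'.E = ψ.E → ψ'.matrix = ψ.matrix →
      (∀ u x, x ∈ ψ.E → u ∉ ψ'.dep x → (u ∉ ψ.dep x ∨ ¬ Dpu ψ u x)) →
      DQRATDeriv ψ0 ψ' (n + 1)

/-- A DQRAT(D^pu) refutation of `ψ0` with `n` steps. -/
def DQRATRefutable (ψ0 : DQBF V) (n : ℕ) : Prop :=
  ∃ ψ : DQBF V, DQRATDeriv ψ0 ψ n ∧ (∅ : Clause V) ∈ ψ.matrix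

/-! ## The ts-LQParity formulas -/

inductive PVar : Type where
  | x : ℕ → PVar
  | z : PVar
  | t : ℕ → PVar
  | s : ℕ → PVar
  | b : PVar
deriving DecidableEq

def L (v : PVar) (b : Bool) : Lit PVar := ⟨v, b⟩

/-- The four clauses of `xor_l(o1, o2, o, zl)`. -/
def xorl (o1 o2 o : PVar) (zl : Lit PVar) : Finset (Clause PVar) :=
  { {zl, L o1 false, L o2 false, L o false},
    {zl, L o1 true,  L o2 true,  L o false},
    {zl, L o1 false, L o2 true,  L o true},
    {zl, L o1 true,  L o2 false, L o true} }

def tsMatrix (N : ℕ) : Finset (Clause PVar) :=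
  xorl (.x 1) (.x 2) (.t 2) (L .z true) ∪
    (Finset.Icc 3 N).biUnion (fun i => xorl (.t (i - 1)) (.x i) (.t i) (L .z true)) ∪
    xorl (.x 1) (.x 2) (.s 2) (L .z false) ∪
    (Finset.Icc 3 N).biUnion (fun i => xorl (.s (i - 1)) (.x i) (.s i) (L .z false)) ∪
    {{L .z true, L (.t N) true}, {L .z false, L (.s N) false}}

def tsDep : PVar → Finset PVar
  | .t _ => {.z}
  | .s _ => {.z}
  | .b => {.z}
  | _ => ∅

/-- The QBF ts-LQParity(N), presented as a DQBF. -/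
def tsLQParity (N : ℕ) : DQBF PVar where
  U := {.z}
  E := (Finset.Icc 1 N).image PVar.x ∪ (Finset.Icc 2 N).image PVar.t ∪
    (Finset.Icc 2 N).image PVar.s
  dep := tsDep
  matrix := tsMatrix N

def bridgedMatrix (N : ℕ) : Finset (Clause PVar) :=
  tsMatrix N ∪
    { {L .z true, L (.t N) false, L .b true}, {L .z true, L (.t N) true, L .b false},
      {L .z false, L (.s N) false, L .b true}, {L .z false, L (.s N) true, L .b false} }

/-- The QBF Bridged ts-LQParity(N), presented as a DQBF. -/
def bridged (N : ℕ) : DQBF PVar where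
  U := {.z}
  E := (Finset.Icc 1 N).image PVar.x ∪ (Finset.Icc 2 N).image PVar.t ∪
    (Finset.Icc 2 N).image PVar.s ∪ {.b}
  dep := tsDep
  matrix := bridgedMatrix N

/-! ## The NP-hardness gadget -/

inductive GVar (W : Type) : Type where
  | v : W → GVar W
  | u : GVar W
  | x : GVar W
deriving DecidableEq

/-- The gadget DQBF `∀(V ∪ {u}) ∃x(V ∪ {u}). (⋁_{v ∈ V} v) ∨ u ∨ ¬x`. -/
def gadget {W : Type} [DecidableEq W] (Vs : Finset W) : DQBF (GVar W) where
  U := Vs.image GVar.v ∪ {GVar.u}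
  E := {GVar.x}
  dep := fun y => if y = GVar.x then Vs.image GVar.v ∪ {GVar.u} else ∅
  matrix := {Vs.image (fun w => (⟨GVar.v w, true⟩ : Lit (GVar W))) ∪
    ({⟨GVar.u, true⟩, ⟨GVar.x, false⟩} : Clause (GVar W))}

/-- The Skolem function `f_x = φ(V) ∧ u`. -/
def gadgetSkolem {W : Type} [DecidableEq W] (φ : Finset (Clause W)) :
    GVar W → (GVar W → Bool) → Bool := fun y β =>
  if y = GVar.x then
    (decide (∀ C ∈ φ, ∃ l ∈ C, β (GVar.v l.var) = l.pos)) && β GVar.u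
  else false


/-! ### cube lemma -/

def pref (α : ℕ → Bool) : ℕ → Bool
  | 0 => false
  | m+1 => xor (pref α m) (α (m+1))

lemma pref_succ (α : ℕ → Bool) (m : ℕ) : pref α (m+1) = xor (pref α m) (α (m+1)) := rfl

def flip1 (m : ℕ) (α : ℕ → Bool) : ℕ → Bool := fun v => if v = m then !(α v) else α v

lemma flip1_ne (m : ℕ) (α : ℕ → Bool) {v : ℕ} (h : v ≠ m) : flip1 m α v = α v := by
  simp [flip1, h]

lemma flip1_eq (m : ℕ) (α : ℕ → Bool) : flip1 m α m = !(α m) := by simp [flip1]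

lemma pref_flip1_lt (α : ℕ → Bool) (m : ℕ) : ∀ k, k < m → pref (flip1 m α) k = pref α k := by
  intro k
  induction k with
  | zero => intro _; rfl
  | succ j ihj =>
    intro h
    rw [pref_succ, pref_succ, ihj (by omega), flip1_ne m α (by omega)]

lemma pref_flip1 (α : ℕ → Bool) (m : ℕ) (hm : 1 ≤ m) :
    ∀ n, m ≤ n → pref (flip1 m α) n = !(pref α n) := by
  intro n
  induction n with
  | zero => intro h; omega
  | succ k ih =>
    intro hle
    rcases Nat.lt_or_ge k m with hk | hk
    · have hmk : m = k + 1 := by omega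
      rw [pref_succ, pref_succ, pref_flip1_lt α m k (by omega), hmk, flip1_eq]
      cases pref α k <;> cases α (k+1) <;> rfl
    · rw [pref_succ, pref_succ, ih hk, flip1_ne m α (by omega)]
      cases pref α k <;> cases α (k+1) <;> rfl

abbrev PCube := Finset (ℕ × Bool)

def Matches (α : ℕ → Bool) (E : PCube) : Prop := ∀ p ∈ E, α p.1 = p.2

def compatF (S : Finset ℕ) (g : ℕ → Bool) (E : PCube) : Prop :=
  ∀ p ∈ E, p.1 ∈ S → p.2 = g p.1

instance (S : Finset ℕ) (g : ℕ → Bool) (E : PCube) : Decidable (compatF S g E) := by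
  unfold compatF; infer_instance

section CubeLemma

variable (L : List (PCube × Bool)) (n : ℕ)

def cvars (E : PCube) : Finset ℕ := E.image Prod.fst

noncomputable def aliveSet (S : Finset ℕ) (g : ℕ → Bool) : Finset (Fin L.length) :=
  Finset.univ.filter (fun i => n/2 ≤ (cvars (L.get i).1).card ∧ compatF S g (L.get i).1)

lemma greedy (hn : 4 ≤ n)
    (hvars : ∀ e ∈ L, ∀ p ∈ e.1, p.1 ∈ Finset.Icc 1 n) :
    ∀ j, j ≤ n/4 → ∃ S g, S ⊆ Finset.Icc 1 n ∧ S.card ≤ j ∧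
      16^j * (aliveSet L n S g).card ≤ 15^j * L.length := by
  intro j
  induction j with
  | zero =>
    intro _
    refine ⟨∅, fun _ => false, by simp, by simp, ?_⟩
    have h1 : (aliveSet L n ∅ (fun _ => false)).card ≤ (Finset.univ : Finset (Fin L.length)).card :=
      Finset.card_filter_le _ _
    simpa using h1
  | succ j ih =>
    intro hj
    obtain ⟨S, g, hS, hScard, hA⟩ := ih (by omega)
    set A := aliveSet L n S g with hAdef
    rcases Nat.eq_zero_or_pos A.card with h0 | hpos
    · exact ⟨S, g, hS, by omega, by rw [h0]; positivity⟩
    have hmemL : ∀ i : Fin L.length, L.get i ∈ L := by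
      intro i
      have := List.get_mem L i
      simpa using this
    -- every alive cube has ≥ n/2 - j vars outside S
    have hbig : ∀ i ∈ A, n/2 - j ≤ ((cvars (L.get i).1) \ S).card := by
      intro i hi
      have hi' := Finset.mem_filter.mp hi
      have h1 : n/2 ≤ (cvars (L.get i).1).card := hi'.2.1
      have h2 := Finset.card_le_card_sdiff_add_card (s := cvars (L.get i).1) (t := S)
      omega
    have hsub : ∀ i ∈ A, (cvars (L.get i).1) \ S ⊆ Finset.Icc 1 n \ S := by
      intro i _
      apply Finset.sdiff_subset_sdiff _ (le_refl _)
      intro v hv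
      obtain ⟨p, hp, rfl⟩ := Finset.mem_image.mp hv
      exact hvars _ (hmemL i) p hp
    set U := Finset.Icc 1 n \ S with hU
    have hUne : U.Nonempty := by
      have hcard : U.card = n - S.card := by
        rw [hU, Finset.card_sdiff_of_subset hS, Nat.card_Icc]
        omega
      rw [← Finset.card_pos, hcard]
      omega
    have hcount : A.card * (n/2 - j) ≤
        ∑ v ∈ U, (A.filter (fun i => v ∈ cvars (L.get i).1)).card := by
      calc A.card * (n/2 - j) = ∑ _i ∈ A, (n/2 - j) := by rw [Finset.sum_const, smul_eq_mul]
      _ ≤ ∑ i ∈ A, ((cvars (L.get i).1) \ S).card := Finset.sum_le_sum hbig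
      _ ≤ ∑ i ∈ A, (U.filter (fun v => v ∈ cvars (L.get i).1)).card := by
          apply Finset.sum_le_sum
          intro i hi
          apply Finset.card_le_card
          intro v hv
          exact Finset.mem_filter.mpr ⟨hsub i hi hv, (Finset.mem_sdiff.mp hv).1⟩
      _ = ∑ i ∈ A, ∑ v ∈ U, (if v ∈ cvars (L.get i).1 then 1 else 0) := by
          apply Finset.sum_congr rfl
          intro i _
          rw [Finset.card_filter]
      _ = ∑ v ∈ U, ∑ i ∈ A, (if v ∈ cvars (L.get i).1 then 1 else 0) := Finset.sum_comm
      _ = ∑ v ∈ U, (A.filter (fun i => v ∈ cvars (L.get i).1)).card := by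
          apply Finset.sum_congr rfl
          intro v _
          rw [Finset.card_filter]
    -- pigeonhole
    have hex : ∃ v ∈ U, A.card * (n/2 - j) ≤
        U.card * (A.filter (fun i => v ∈ cvars (L.get i).1)).card := by
      by_contra hcon
      push_neg at hcon
      have hlt : ∑ v ∈ U, U.card * (A.filter (fun i => v ∈ cvars (L.get i).1)).card
          < ∑ _v ∈ U, A.card * (n/2-j) :=
        Finset.sum_lt_sum_of_nonempty hUne (fun v hv => hcon v hv)
      rw [Finset.sum_const, smul_eq_mul, ← Finset.mul_sum] at hlt
      have := Nat.mul_le_mul_left U.card hcount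
      omega
    obtain ⟨v, hvU, hv⟩ := hex
    set cnt := (A.filter (fun i => v ∈ cvars (L.get i).1)).card with hcnt
    -- value split
    have hsplit : ∃ b : Bool, cnt ≤ 2 * (A.filter (fun i => (v, b) ∈ (L.get i).1)).card := by
      have hcover : A.filter (fun i => v ∈ cvars (L.get i).1) ⊆
          (A.filter (fun i => (v, true) ∈ (L.get i).1)) ∪
          (A.filter (fun i => (v, false) ∈ (L.get i).1)) := by
        intro i hi
        have hi' := Finset.mem_filter.mp hi
        obtain ⟨p, hp, hp1⟩ := Finset.mem_image.mp hi'.2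
        rcases Bool.eq_false_or_eq_true p.2 with h | h
        · apply Finset.mem_union_left
          refine Finset.mem_filter.mpr ⟨hi'.1, ?_⟩
          have : p = (v, true) := by
            ext
            · exact hp1
            · simpa using h
          rwa [← this]
        · apply Finset.mem_union_right
          refine Finset.mem_filter.mpr ⟨hi'.1, ?_⟩
          have : p = (v, false) := by
            ext
            · exact hp1
            · simpa using h
          rwa [← this]
      have hc := Finset.card_le_card hcover
      have hc2 := Finset.card_union_le (A.filter (fun i => (v, true) ∈ (L.get i).1))
        (A.filter (fun i => (v, false) ∈ (L.get i).1))
      rcases Nat.le_total ((A.filter (fun i => (v, true) ∈ (L.get i).1)).card)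
        ((A.filter (fun i => (v, false) ∈ (L.get i).1)).card) with h | h
      · exact ⟨false, by omega⟩
      · exact ⟨true, by omega⟩
    obtain ⟨b, hb⟩ := hsplit
    set K := A.filter (fun i => (v, b) ∈ (L.get i).1) with hK
    refine ⟨insert v S, Function.update g v (!b), ?_, ?_, ?_⟩
    · intro u hu
      rcases Finset.mem_insert.mp hu with rfl | hu'
      · exact (Finset.mem_sdiff.mp hvU).1
      · exact hS hu'
    · have := Finset.card_insert_le v S
      omega
    · -- new alive set ⊆ A \ K
      have hnew : aliveSet L n (insert v S) (Function.update g v (!b)) ⊆ A \ K := by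
        intro i hi
        have hi' := Finset.mem_filter.mp hi
        have hvnotS : v ∉ S := (Finset.mem_sdiff.mp hvU).2
        have hiA : i ∈ A := by
          refine Finset.mem_filter.mpr ⟨Finset.mem_univ i, hi'.2.1, ?_⟩
          intro p hp hpS
          have := hi'.2.2 p hp (Finset.mem_insert_of_mem hpS)
          rwa [Function.update_of_ne (by rintro rfl; exact hvnotS hpS)] at this
        refine Finset.mem_sdiff.mpr ⟨hiA, ?_⟩
        intro hiK
        have hvb : (v, b) ∈ (L.get i).1 := (Finset.mem_filter.mp hiK).2
        have := hi'.2.2 (v, b) hvb (Finset.mem_insert_self v S)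
        simp [Function.update_self] at this
      have hKsub : K ⊆ A := Finset.filter_subset _ _
      have hcard : (aliveSet L n (insert v S) (Function.update g v (!b))).card ≤ A.card - K.card := by
        have h1 := Finset.card_le_card hnew
        rwa [Finset.card_sdiff_of_subset hKsub] at h1
      -- 16 * K.card ≥ A.card
      have hmargin : n ≤ 8 * (n/2 - j) := by omega
      have hUcard : U.card ≤ n := by
        have : U ⊆ Finset.Icc 1 n := Finset.sdiff_subset
        have := Finset.card_le_card this
        rwa [Nat.card_Icc, Nat.add_sub_cancel] at this
      have hAK : A.card ≤ 16 * K.card := by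
        have h1 : A.card * (n/2 - j) ≤ U.card * cnt := hv
        have h2 : U.card * cnt ≤ n * (2 * K.card) := by
          calc U.card * cnt ≤ n * cnt := Nat.mul_le_mul_right cnt hUcard
          _ ≤ n * (2 * K.card) := Nat.mul_le_mul_left n hb
        nlinarith [hmargin, hpos]
      calc 16^(j+1) * (aliveSet L n (insert v S) (Function.update g v (!b))).card
          ≤ 16^j * (16 * (A.card - K.card)) := by
            have h16 : 16 * (aliveSet L n (insert v S) (Function.update g v (!b))).card ≤
                16 * (A.card - K.card) := by omega
            calc 16^(j+1) * (aliveSet L n (insert v S) (Function.update g v (!b))).card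
                = 16^j * (16 * (aliveSet L n (insert v S) (Function.update g v (!b))).card) := by
                  rw [pow_succ]; ring
            _ ≤ 16^j * (16 * (A.card - K.card)) := Nat.mul_le_mul_left _ h16
      _ ≤ 16^j * (15 * A.card) := by
            have : 16 * (A.card - K.card) ≤ 15 * A.card := by omega
            exact Nat.mul_le_mul_left _ this
      _ ≤ 15^(j+1) * L.length := by
            rw [pow_succ]
            calc 16^j * (15 * A.card) = 15 * (16^j * A.card) := by ring
            _ ≤ 15 * (15^j * L.length) := Nat.mul_le_mul_left 15 hA
            _ = 15^j * 15 * L.length := by ring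

lemma cube_lower (hn : 4 ≤ n)
    (hvars : ∀ e ∈ L, ∀ p ∈ e.1, p.1 ∈ Finset.Icc 1 n)
    (hcov : ∀ α : ℕ → Bool, ∃ i : Fin L.length, Matches α (L.get i).1)
    (hpure : ∀ (α : ℕ → Bool) (i : Fin L.length), Matches α (L.get i).1 →
      (∀ j : Fin L.length, j < i → ¬ Matches α (L.get j).1) → pref α n = (L.get i).2) :
    16^(n/4) ≤ 15^(n/4) * (L.length + 1) := by
  by_contra hcon
  push_neg at hcon
  obtain ⟨S, g, hS, hScard, hA⟩ := greedy L n hn hvars (n/4) le_rfl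
  have hA0 : (aliveSet L n S g).card = 0 := by
    by_contra h0
    have h1 : 1 ≤ (aliveSet L n S g).card := Nat.pos_of_ne_zero h0
    have h2 : 16^(n/4) * 1 ≤ 16^(n/4) * (aliveSet L n S g).card :=
      Nat.mul_le_mul_left _ h1
    have h3 : 15^(n/4) * L.length ≤ 15^(n/4) * (L.length+1) :=
      Nat.mul_le_mul_left _ (by omega)
    omega
  classical
  set P : Fin L.length → Prop :=
    fun i => ∃ α : ℕ → Bool, (∀ v ∈ S, α v = g v) ∧ Matches α (L.get i).1 with hP
  have hPne : (Finset.univ.filter P).Nonempty := by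
    obtain ⟨i, hi⟩ := hcov (fun v => if v ∈ S then g v else false)
    exact ⟨i, Finset.mem_filter.mpr ⟨Finset.mem_univ _,
      ⟨_, fun v hv => by simp [hv], hi⟩⟩⟩
  set i0 := (Finset.univ.filter P).min' hPne with hi0
  have hi0P : P i0 := (Finset.mem_filter.mp ((Finset.univ.filter P).min'_mem hPne)).2
  have hmin : ∀ j, j < i0 → ¬ P j := by
    intro j hj hPj
    have := (Finset.univ.filter P).min'_le j
      (Finset.mem_filter.mpr ⟨Finset.mem_univ _, hPj⟩)
    rw [← hi0] at this
    exact absurd this (not_le.mpr hj)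
  obtain ⟨αw, hαwS, hαwM⟩ := hi0P
  have hwide : (cvars (L.get i0).1).card < n/2 := by
    by_contra hnar
    push_neg at hnar
    have hmem : i0 ∈ aliveSet L n S g := by
      refine Finset.mem_filter.mpr ⟨Finset.mem_univ _, hnar, ?_⟩
      intro p hp hpS
      rw [← hαwS p.1 hpS]
      exact (hαwM p hp).symm
    have : 0 < (aliveSet L n S g).card := Finset.card_pos.mpr ⟨i0, hmem⟩
    omega
  have hmex : ∃ m, m ∈ Finset.Icc 1 n ∧ m ∉ S ∪ cvars (L.get i0).1 := by
    by_contra hno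
    push_neg at hno
    have hsub2 : Finset.Icc 1 n ⊆ S ∪ cvars (L.get i0).1 := fun m hm => hno m hm
    have hc1 := Finset.card_le_card hsub2
    have hc2 := Finset.card_union_le S (cvars (L.get i0).1)
    rw [Nat.card_Icc, Nat.add_sub_cancel] at hc1
    omega
  obtain ⟨m, hmI, hmout⟩ := hmex
  have hmS : m ∉ S := fun h => hmout (Finset.mem_union_left _ h)
  have hmV : m ∉ cvars (L.get i0).1 := fun h => hmout (Finset.mem_union_right _ h)
  set α' := flip1 m αw with hα'
  have hα'M : Matches α' (L.get i0).1 := by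
    intro p hp
    have hpm : p.1 ≠ m := by
      intro h
      exact hmV (Finset.mem_image.mpr ⟨p, hp, h⟩)
    rw [hα', flip1_ne m αw hpm]
    exact hαwM p hp
  have hα'S : ∀ v ∈ S, α' v = g v := by
    intro v hv
    rw [hα', flip1_ne m αw (by rintro rfl; exact hmS hv)]
    exact hαwS v hv
  have hfw : ∀ j : Fin L.length, j < i0 → ¬ Matches αw (L.get j).1 := by
    intro j hj hMj
    exact hmin j hj ⟨αw, hαwS, hMj⟩
  have hf' : ∀ j : Fin L.length, j < i0 → ¬ Matches α' (L.get j).1 := by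
    intro j hj hMj
    exact hmin j hj ⟨α', hα'S, hMj⟩
  have p1 := hpure αw i0 hαwM hfw
  have p2 := hpure α' i0 hα'M hf'
  have hm1 : 1 ≤ m := (Finset.mem_Icc.mp hmI).1
  have hm2 : m ≤ n := (Finset.mem_Icc.mp hmI).2
  have : pref α' n = !(pref αw n) := pref_flip1 αw m hm1 n hm2
  rw [p1, p2] at this
  simp at this

end CubeLemma

-- reduction part 1: basic defs and matrix lemmas
namespace TsRed

def canVal (α : ℕ → Bool) : PVar → Bool
  | .x j => α j
  | .t m => pref α m
  | .s m => pref α m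
  | .z => true
  | .b => false

def Fal (α : ℕ → Bool) (C : Clause PVar) : Prop :=
  ∀ l ∈ C, l.var ≠ PVar.z → canVal α l.var ≠ l.pos

def zTaut (C : Clause PVar) : Prop :=
  (⟨PVar.z, true⟩ : Lit PVar) ∈ C ∧ (⟨PVar.z, false⟩ : Lit PVar) ∈ C

def isTSb : PVar → Bool
  | .t _ => true
  | .s _ => true
  | _ => false

def noTS (C : Clause PVar) : Prop := ∀ l ∈ C, isTSb l.var = false

def TRIG (α : ℕ → Bool) (C : Clause PVar) : Prop := ¬ zTaut C ∧ noTS C ∧ Fal α C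

def legalVar (N : ℕ) : PVar → Prop
  | .z => True
  | .x j => 1 ≤ j ∧ j ≤ N
  | .t m => 2 ≤ m ∧ m ≤ N
  | .s m => 2 ≤ m ∧ m ≤ N
  | .b => False

def J0 (N : ℕ) (C : Clause PVar) : Prop := ∀ l ∈ C, legalVar N l.var

def J1 (C : Clause PVar) : Prop :=
  (∀ m b, (⟨PVar.t m, b⟩ : Lit PVar) ∈ C → (⟨PVar.z, true⟩ : Lit PVar) ∈ C) ∧
  (∀ m b, (⟨PVar.s m, b⟩ : Lit PVar) ∈ C → (⟨PVar.z, false⟩ : Lit PVar) ∈ C)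

lemma pref_xor (α : ℕ → Bool) (i : ℕ) (hi : 1 ≤ i) :
    pref α i = xor (pref α (i-1)) (α i) := by
  obtain ⟨k, rfl⟩ : ∃ k, i = k+1 := ⟨i-1, by omega⟩
  simp [pref_succ]

lemma pref_one (α : ℕ → Bool) : pref α 1 = α 1 := by
  have : pref α 1 = xor (pref α 0) (α 1) := rfl
  simpa [pref] using this

lemma pref_two (α : ℕ → Bool) : pref α 2 = xor (α 1) (α 2) := by
  have h2 : pref α 2 = xor (pref α 1) (α 2) := rfl
  rw [h2, pref_one]

lemma xorl_cases {C : Clause PVar} {o1 o2 o : PVar} {zl : Lit PVar}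
    (h : C ∈ xorl o1 o2 o zl) :
    C = {zl, L o1 false, L o2 false, L o false} ∨
    C = {zl, L o1 true, L o2 true, L o false} ∨
    C = {zl, L o1 false, L o2 true, L o true} ∨
    C = {zl, L o1 true, L o2 false, L o true} := by
  simpa [xorl, Finset.mem_insert, Finset.mem_singleton] using h

lemma tsMatrix_cases {N : ℕ} {C : Clause PVar} (h : C ∈ tsMatrix N) :
    C ∈ xorl (.x 1) (.x 2) (.t 2) (L .z true) ∨
    (∃ i, 3 ≤ i ∧ i ≤ N ∧ C ∈ xorl (.t (i-1)) (.x i) (.t i) (L .z true)) ∨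
    C ∈ xorl (.x 1) (.x 2) (.s 2) (L .z false) ∨
    (∃ i, 3 ≤ i ∧ i ≤ N ∧ C ∈ xorl (.s (i-1)) (.x i) (.s i) (L .z false)) ∨
    C = {L .z true, L (.t N) true} ∨ C = {L .z false, L (.s N) false} := by
  simp only [tsMatrix, Finset.mem_union, Finset.mem_biUnion, Finset.mem_Icc,
    Finset.mem_insert, Finset.mem_singleton] at h
  rcases h with ((((h | h) | h) | h) | h)
  · exact Or.inl h
  · obtain ⟨i, hi, hC⟩ := h
    exact Or.inr (Or.inl ⟨i, hi.1, hi.2, hC⟩)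
  · exact Or.inr (Or.inr (Or.inl h))
  · obtain ⟨i, hi, hC⟩ := h
    exact Or.inr (Or.inr (Or.inr (Or.inl ⟨i, hi.1, hi.2, hC⟩)))
  · rcases h with h | h
    · exact Or.inr (Or.inr (Or.inr (Or.inr (Or.inl h))))
    · exact Or.inr (Or.inr (Or.inr (Or.inr (Or.inr h))))

end TsRed
namespace TsRed

lemma xor_fal_false {α : ℕ → Bool} {o1 o2 o : PVar} {zl : Lit PVar} {C : Clause PVar}
    (hC : C ∈ xorl o1 o2 o zl) (hF : Fal α C)
    (h1 : o1 ≠ PVar.z) (h2 : o2 ≠ PVar.z) (h3 : o ≠ PVar.z)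
    (hid : canVal α o = xor (canVal α o1) (canVal α o2)) : False := by
  rcases xorl_cases hC with rfl | rfl | rfl | rfl
  · have e1 := hF (L o1 false) (by simp [L]) h1
    have e2 := hF (L o2 false) (by simp [L]) h2
    have e3 := hF (L o false) (by simp [L]) h3
    simp only [L] at e1 e2 e3
    rw [hid] at e3
    revert e1 e2 e3
    cases (canVal α o1) <;> cases (canVal α o2) <;> simp
  · have e1 := hF (L o1 true) (by simp [L]) h1
    have e2 := hF (L o2 true) (by simp [L]) h2
    have e3 := hF (L o false) (by simp [L]) h3
    simp only [L] at e1 e2 e3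
    rw [hid] at e3
    revert e1 e2 e3
    cases (canVal α o1) <;> cases (canVal α o2) <;> simp
  · have e1 := hF (L o1 false) (by simp [L]) h1
    have e2 := hF (L o2 true) (by simp [L]) h2
    have e3 := hF (L o true) (by simp [L]) h3
    simp only [L] at e1 e2 e3
    rw [hid] at e3
    revert e1 e2 e3
    cases (canVal α o1) <;> cases (canVal α o2) <;> simp
  · have e1 := hF (L o1 true) (by simp [L]) h1
    have e2 := hF (L o2 false) (by simp [L]) h2
    have e3 := hF (L o true) (by simp [L]) h3
    simp only [L] at e1 e2 e3
    rw [hid] at e3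
    revert e1 e2 e3
    cases (canVal α o1) <;> cases (canVal α o2) <;> simp

lemma matrix_M4 {N : ℕ} {C : Clause PVar} (hC : C ∈ tsMatrix N) (α : ℕ → Bool)
    (hF : Fal α C) : (⟨PVar.z, !(pref α N)⟩ : Lit PVar) ∈ C := by
  rcases tsMatrix_cases hC with h | ⟨i, hi3, hiN, h⟩ | h | ⟨i, hi3, hiN, h⟩ | rfl | rfl
  · exact absurd (xor_fal_false h hF (by simp) (by simp) (by simp)
      (by simp [canVal, pref_two])) id
  · refine absurd (xor_fal_false h hF (by simp) (by simp) (by simp) ?_) id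
    simp only [canVal]
    exact pref_xor α i (by omega)
  · exact absurd (xor_fal_false h hF (by simp) (by simp) (by simp)
      (by simp [canVal, pref_two])) id
  · refine absurd (xor_fal_false h hF (by simp) (by simp) (by simp) ?_) id
    simp only [canVal]
    exact pref_xor α i (by omega)
  · have e := hF (L (.t N) true) (by simp [L]) (by simp [L])
    simp only [L, canVal] at e
    have : pref α N = false := by
      cases h : pref α N
      · rfl
      · exact absurd h e
    rw [this]
    simp [L]
  · have e := hF (L (.s N) false) (by simp [L]) (by simp [L])
    simp only [L, canVal] at e
    have : pref α N = true := by
      cases h : pref α N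
      · exact absurd h e
      · rfl
    rw [this]
    simp [L]

end TsRed
namespace TsRed

lemma xorl_vars {C : Clause PVar} {o1 o2 o : PVar} {zl : Lit PVar}
    (hC : C ∈ xorl o1 o2 o zl) :
    ∀ l ∈ C, l = zl ∨ l.var = o1 ∨ l.var = o2 ∨ l.var = o := by
  intro l hl
  rcases xorl_cases hC with rfl | rfl | rfl | rfl <;>
    (simp only [Finset.mem_insert, Finset.mem_singleton] at hl;
     rcases hl with rfl | rfl | rfl | rfl <;> simp [L])

lemma matrix_J0 {N : ℕ} (hN : 2 ≤ N) {C : Clause PVar} (hC : C ∈ tsMatrix N) :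
    J0 N C := by
  intro l hl
  rcases tsMatrix_cases hC with h | ⟨i, hi3, hiN, h⟩ | h | ⟨i, hi3, hiN, h⟩ | rfl | rfl
  · rcases xorl_vars h l hl with rfl | h' | h' | h' <;>
      simp_all [legalVar, L] <;> omega
  · rcases xorl_vars h l hl with rfl | h' | h' | h' <;>
      simp_all [legalVar, L] <;> omega
  · rcases xorl_vars h l hl with rfl | h' | h' | h' <;>
      simp_all [legalVar, L] <;> omega
  · rcases xorl_vars h l hl with rfl | h' | h' | h' <;>
      simp_all [legalVar, L] <;> omega
  · simp only [Finset.mem_insert, Finset.mem_singleton] at hl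
    rcases hl with rfl | rfl <;> simp [legalVar, L] <;> omega
  · simp only [Finset.mem_insert, Finset.mem_singleton] at hl
    rcases hl with rfl | rfl <;> simp [legalVar, L] <;> omega

lemma matrix_hasTS {N : ℕ} {C : Clause PVar} (hC : C ∈ tsMatrix N) : ¬ noTS C := by
  intro hno
  have key : ∀ (v : PVar) (b : Bool), isTSb v = true → (L v b) ∈ C → False := by
    intro v b hv hmem
    have := hno (L v b) hmem
    simp [L] at this
    rw [this] at hv
    exact Bool.false_ne_true hv
  rcases tsMatrix_cases hC with h | ⟨i, hi3, hiN, h⟩ | h | ⟨i, hi3, hiN, h⟩ | rfl | rfl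
  · rcases xorl_cases h with rfl | rfl | rfl | rfl
    · exact key (.t 2) false rfl (by simp [L])
    · exact key (.t 2) false rfl (by simp [L])
    · exact key (.t 2) true rfl (by simp [L])
    · exact key (.t 2) true rfl (by simp [L])
  · rcases xorl_cases h with rfl | rfl | rfl | rfl
    · exact key (.t i) false rfl (by simp [L])
    · exact key (.t i) false rfl (by simp [L])
    · exact key (.t i) true rfl (by simp [L])
    · exact key (.t i) true rfl (by simp [L])
  · rcases xorl_cases h with rfl | rfl | rfl | rfl
    · exact key (.s 2) false rfl (by simp [L])
    · exact key (.s 2) false rfl (by simp [L])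
    · exact key (.s 2) true rfl (by simp [L])
    · exact key (.s 2) true rfl (by simp [L])
  · rcases xorl_cases h with rfl | rfl | rfl | rfl
    · exact key (.s i) false rfl (by simp [L])
    · exact key (.s i) false rfl (by simp [L])
    · exact key (.s i) true rfl (by simp [L])
    · exact key (.s i) true rfl (by simp [L])
  · exact key (.t N) true rfl (by simp [L])
  · exact key (.s N) false rfl (by simp [L])

lemma matrix_J1 {N : ℕ} {C : Clause PVar} (hC : C ∈ tsMatrix N) : J1 C := by
  constructor
  · intro m b hmem
    rcases tsMatrix_cases hC with h | ⟨i, hi3, hiN, h⟩ | h | ⟨i, hi3, hiN, h⟩ | rfl | rfl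
    · rcases xorl_cases h with rfl | rfl | rfl | rfl <;> simp [L]
    · rcases xorl_cases h with rfl | rfl | rfl | rfl <;> simp [L]
    · rcases xorl_vars h _ hmem with h' | h' | h' | h' <;> simp_all [L]
    · rcases xorl_vars h _ hmem with h' | h' | h' | h' <;> simp_all [L]
    · simp [L]
    · simp only [Finset.mem_insert, Finset.mem_singleton] at hmem
      rcases hmem with h' | h' <;> simp_all [L]
  · intro m b hmem
    rcases tsMatrix_cases hC with h | ⟨i, hi3, hiN, h⟩ | h | ⟨i, hi3, hiN, h⟩ | rfl | rfl
    · rcases xorl_vars h _ hmem with h' | h' | h' | h' <;> simp_all [L]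
    · rcases xorl_vars h _ hmem with h' | h' | h' | h' <;> simp_all [L]
    · rcases xorl_cases h with rfl | rfl | rfl | rfl <;> simp [L]
    · rcases xorl_cases h with rfl | rfl | rfl | rfl <;> simp [L]
    · simp only [Finset.mem_insert, Finset.mem_singleton] at hmem
      rcases hmem with h' | h' <;> simp_all [L]
    · simp [L]

end TsRed
namespace TsRed

lemma z_notE {N : ℕ} : PVar.z ∉ (tsLQParity N).E := by
  simp [tsLQParity]

lemma t_E {N m : ℕ} (h2 : 2 ≤ m) (hN : m ≤ N) : PVar.t m ∈ (tsLQParity N).E := by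
  simp only [tsLQParity, Finset.mem_union, Finset.mem_image, Finset.mem_Icc]
  exact Or.inl (Or.inr ⟨m, ⟨h2, hN⟩, rfl⟩)

lemma s_E {N m : ℕ} (h2 : 2 ≤ m) (hN : m ≤ N) : PVar.s m ∈ (tsLQParity N).E := by
  simp only [tsLQParity, Finset.mem_union, Finset.mem_image, Finset.mem_Icc]
  exact Or.inr ⟨m, ⟨h2, hN⟩, rfl⟩

lemma E_cases {N : ℕ} {x : PVar} (hx : x ∈ (tsLQParity N).E) :
    (∃ j, 1 ≤ j ∧ j ≤ N ∧ x = PVar.x j) ∨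
    (∃ m, 2 ≤ m ∧ m ≤ N ∧ x = PVar.t m) ∨
    (∃ m, 2 ≤ m ∧ m ≤ N ∧ x = PVar.s m) := by
  simp only [tsLQParity, Finset.mem_union, Finset.mem_image, Finset.mem_Icc] at hx
  rcases hx with (⟨j, hj, rfl⟩ | ⟨m, hm, rfl⟩) | ⟨m, hm, rfl⟩
  · exact Or.inl ⟨j, hj.1, hj.2, rfl⟩
  · exact Or.inr (Or.inl ⟨m, hm.1, hm.2, rfl⟩)
  · exact Or.inr (Or.inr ⟨m, hm.1, hm.2, rfl⟩)

lemma U_mem {N : ℕ} {v : PVar} (h : v ∈ (tsLQParity N).U) : v = PVar.z := by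
  simpa [tsLQParity] using h

lemma D_t {N m : ℕ} : Dtrv (tsLQParity N) PVar.z (PVar.t m) := by
  simp [Dtrv, tsLQParity, tsDep]

lemma D_s {N m : ℕ} : Dtrv (tsLQParity N) PVar.z (PVar.s m) := by
  simp [Dtrv, tsLQParity, tsDep]

lemma mem_take_get {π : List (Clause PVar)} {i : ℕ} {C : Clause PVar}
    (h : C ∈ π.take i) :
    ∃ j, ∃ hj : j < π.length, j < i ∧ π.get ⟨j, hj⟩ = C := by
  obtain ⟨k, hk⟩ := List.mem_iff_get.mp h
  have hlen : (π.take i).length = min i π.length := List.length_take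
  have hk1 : (k : ℕ) < min i π.length := by
    have := k.isLt
    omega
  have hjlen : (k : ℕ) < π.length := by omega
  have hji : (k : ℕ) < i := by omega
  refine ⟨k, hjlen, hji, ?_⟩
  rw [← hk]
  simp

end TsRed
namespace TsRed

lemma goodAll {N : ℕ} {π : List (Clause PVar)} (hN : 2 ≤ N)
    (hp : IsLDQProof (tsLQParity N) (Dtrv (tsLQParity N)) π) :
    ∀ i (hi : i < π.length), J0 N (π.get ⟨i, hi⟩) ∧ J1 (π.get ⟨i, hi⟩) := by
  intro i
  induction i using Nat.strong_induction_on with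
  | _ i IH =>
    intro hi
    have hstep := hp ⟨i, hi⟩
    rcases hstep with hax | ⟨w, hwU, hwC, hprev, hcond⟩ | ⟨x, Ec, Fc, hxE, hCeq, hnE, hnF, hpE, hpF, hside⟩
    · exact ⟨matrix_J0 hN hax, matrix_J1 hax⟩
    · -- reduction
      obtain ⟨j, hj, hji, hEq⟩ := mem_take_get hprev
      have hIH := IH j hji hj
      rw [hEq] at hIH
      have hwz : w.var = PVar.z := U_mem hwU
      set C := π.get ⟨i, hi⟩ with hC
      have hJ0 : J0 N C := by
        intro l hl
        exact hIH.1 l (Finset.mem_insert_of_mem hl)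
      have hnoTS : ∀ m b, ((⟨PVar.t m, b⟩ : Lit PVar) ∉ C) ∧ ((⟨PVar.s m, b⟩ : Lit PVar) ∉ C) := by
        intro m b
        constructor
        · intro hmem
          have hleg := hJ0 _ hmem
          simp only [legalVar] at hleg
          have hDE : (PVar.t m) ∈ (tsLQParity N).E := t_E hleg.1 hleg.2
          have := hcond _ hmem hDE
          rw [hwz] at this
          exact this D_t
        · intro hmem
          have hleg := hJ0 _ hmem
          simp only [legalVar] at hleg
          have hDE : (PVar.s m) ∈ (tsLQParity N).E := s_E hleg.1 hleg.2
          have := hcond _ hmem hDE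
          rw [hwz] at this
          exact this D_s
      refine ⟨hJ0, ?_, ?_⟩
      · intro m b hmem
        exact absurd hmem (hnoTS m b).1
      · intro m b hmem
        exact absurd hmem (hnoTS m b).2
    · -- resolution
      obtain ⟨jE, hjE, hjiE, hEqE⟩ := mem_take_get hpE
      obtain ⟨jF, hjF, hjiF, hEqF⟩ := mem_take_get hpF
      have hIHE := IH jE hjiE hjE
      have hIHF := IH jF hjiF hjF
      rw [hEqE] at hIHE
      rw [hEqF] at hIHF
      have hxz : x ≠ PVar.z := by
        intro h
        exact z_notE (h ▸ hxE)
      constructor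
      · intro l hl
        rw [hCeq] at hl
        rcases Finset.mem_union.mp hl with h | h
        · exact hIHE.1 l (Finset.mem_insert_of_mem h)
        · exact hIHF.1 l (Finset.mem_insert_of_mem h)
      · constructor
        · intro m b hmem
          rw [hCeq] at hmem ⊢
          rcases Finset.mem_union.mp hmem with h | h
          · have := hIHE.2.1 m b (Finset.mem_insert_of_mem h)
            rcases Finset.mem_insert.mp this with h' | h'
            · exact absurd (congrArg Lit.var h').symm hxz
            · exact Finset.mem_union_left _ h'
          · have := hIHF.2.1 m b (Finset.mem_insert_of_mem h)
            rcases Finset.mem_insert.mp this with h' | h'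
            · exact absurd (congrArg Lit.var h').symm hxz
            · exact Finset.mem_union_right _ h'
        · intro m b hmem
          rw [hCeq] at hmem ⊢
          rcases Finset.mem_union.mp hmem with h | h
          · have := hIHE.2.2 m b (Finset.mem_insert_of_mem h)
            rcases Finset.mem_insert.mp this with h' | h'
            · exact absurd (congrArg Lit.var h').symm hxz
            · exact Finset.mem_union_left _ h'
          · have := hIHF.2.2 m b (Finset.mem_insert_of_mem h)
            rcases Finset.mem_insert.mp this with h' | h'
            · exact absurd (congrArg Lit.var h').symm hxz
            · exact Finset.mem_union_right _ h'

end TsRed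
namespace TsRed

lemma fal_premise {α : ℕ → Bool} {C side : Clause PVar} {p : Lit PVar}
    (hFal : Fal α C) (hsub : side ⊆ C) (hpv : canVal α p.var ≠ p.pos) :
    Fal α (insert p side) := by
  intro l hl hlz
  rcases Finset.mem_insert.mp hl with rfl | h
  · exact hpv
  · exact hFal l (hsub h) hlz

lemma nt_premise {C side : Clause PVar} {p : Lit PVar}
    (hnt : ¬ zTaut C) (hsub : side ⊆ C) (hpz : p.var ≠ PVar.z) :
    ¬ zTaut (insert p side) := by
  rintro ⟨h1, h2⟩
  apply hnt
  constructor
  · rcases Finset.mem_insert.mp h1 with h | h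
    · exact absurd (congrArg Lit.var h).symm hpz
    · exact hsub h
  · rcases Finset.mem_insert.mp h2 with h | h
    · exact absurd (congrArg Lit.var h).symm hpz
    · exact hsub h

lemma nots_premise {C side : Clause PVar} {p : Lit PVar}
    (hno : noTS C) (hsub : side ⊆ C) (hp : isTSb p.var = false) :
    noTS (insert p side) := by
  intro l hl
  rcases Finset.mem_insert.mp hl with rfl | h
  · exact hp
  · exact hno l (hsub h)

lemma zmem_of_premise {side : Clause PVar} {p : Lit PVar} {b : Bool}
    (h : (⟨PVar.z, b⟩ : Lit PVar) ∈ insert p side) (hpz : p.var ≠ PVar.z) :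
    (⟨PVar.z, b⟩ : Lit PVar) ∈ side := by
  rcases Finset.mem_insert.mp h with h | h
  · exact absurd (congrArg Lit.var h).symm hpz
  · exact h

lemma z_U {N : ℕ} : PVar.z ∈ (tsLQParity N).U := by simp [tsLQParity]

lemma star {N : ℕ} {π : List (Clause PVar)} (hN : 2 ≤ N)
    (hp : IsLDQProof (tsLQParity N) (Dtrv (tsLQParity N)) π) (α : ℕ → Bool) :
    ∀ i (hi : i < π.length),
      (∀ j (hj : j < π.length), j ≤ i → ¬ TRIG α (π.get ⟨j, hj⟩)) →
      Fal α (π.get ⟨i, hi⟩) → ¬ zTaut (π.get ⟨i, hi⟩) →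
      (⟨PVar.z, !(pref α N)⟩ : Lit PVar) ∈ π.get ⟨i, hi⟩ := by
  intro i
  induction i using Nat.strong_induction_on with
  | _ i IH =>
  intro hi Hno hFal hnt
  rcases hp ⟨i, hi⟩ with hax | ⟨w, hwU, hwC, hprev, hcond⟩ |
    ⟨x, Ec, Fc, hxE, hCeq, hnE, hnF, hpE, hpF, hside⟩
  · exact matrix_M4 hax α hFal
  · exfalso
    apply Hno i hi le_rfl
    refine ⟨hnt, ?_, hFal⟩
    intro l hl
    have hleg := (goodAll hN hp i hi).1 l hl
    have hwz := U_mem hwU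
    cases hv : l.var with
    | t m =>
      exfalso
      rw [hv] at hleg
      simp only [legalVar] at hleg
      have := hcond l hl (by rw [hv]; exact t_E hleg.1 hleg.2)
      rw [hwz, hv] at this
      exact this D_t
    | s m =>
      exfalso
      rw [hv] at hleg
      simp only [legalVar] at hleg
      have := hcond l hl (by rw [hv]; exact s_E hleg.1 hleg.2)
      rw [hwz, hv] at this
      exact this D_s
    | x j => simp [isTSb]
    | z => simp [isTSb]
    | b => simp [isTSb]
  · have hxz : x ≠ PVar.z := fun h => z_notE (h ▸ hxE)
    obtain ⟨jE, hjE, hjiE, hEqE⟩ := mem_take_get hpE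
    obtain ⟨jF, hjF, hjiF, hEqF⟩ := mem_take_get hpF
    have hsubE : Ec ⊆ π.get ⟨i, hi⟩ := by rw [hCeq]; exact Finset.subset_union_left
    have hsubF : Fc ⊆ π.get ⟨i, hi⟩ := by rw [hCeq]; exact Finset.subset_union_right
    by_cases hu : canVal α x = true
    · have hFalP : Fal α (insert (⟨x, false⟩ : Lit PVar) Ec) :=
        fal_premise hFal hsubE (by simp [hu])
      have hntP : ¬ zTaut (insert (⟨x, false⟩ : Lit PVar) Ec) :=
        nt_premise hnt hsubE hxz
      have hz := IH jE hjiE hjE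
        (fun j hj hle => Hno j hj (le_trans hle (le_of_lt hjiE)))
        (by rw [hEqE]; exact hFalP) (by rw [hEqE]; exact hntP)
      rw [hEqE] at hz
      exact hsubE (zmem_of_premise hz hxz)
    · have hu' : canVal α x = false := by
        cases h : canVal α x
        · rfl
        · exact absurd h hu
      have hFalP : Fal α (insert (⟨x, true⟩ : Lit PVar) Fc) :=
        fal_premise hFal hsubF (by simp [hu'])
      have hntP : ¬ zTaut (insert (⟨x, true⟩ : Lit PVar) Fc) :=
        nt_premise hnt hsubF hxz
      have hz := IH jF hjiF hjF
        (fun j hj hle => Hno j hj (le_trans hle (le_of_lt hjiF)))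
        (by rw [hEqF]; exact hFalP) (by rw [hEqF]; exact hntP)
      rw [hEqF] at hz
      exact hsubF (zmem_of_premise hz hxz)

end TsRed
namespace TsRed

lemma tex {N : ℕ} {π : List (Clause PVar)} (hN : 2 ≤ N)
    (hp : IsLDQProof (tsLQParity N) (Dtrv (tsLQParity N)) π) (α : ℕ → Bool) :
    ∀ i (hi : i < π.length),
      (∀ j (hj : j < π.length), j < i → ¬ TRIG α (π.get ⟨j, hj⟩)) →
      zTaut (π.get ⟨i, hi⟩) → noTS (π.get ⟨i, hi⟩) → Fal α (π.get ⟨i, hi⟩) →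
      False := by
  intro i
  induction i using Nat.strong_induction_on with
  | _ i IH =>
  intro hi Hno htaut hnoTS hFal
  rcases hp ⟨i, hi⟩ with hax | ⟨w, hwU, hwC, hprev, hcond⟩ |
    ⟨x, Ec, Fc, hxE, hCeq, hnE, hnF, hpE, hpF, hside⟩
  · exact matrix_hasTS hax hnoTS
  · obtain ⟨j, hj, hji, hEq⟩ := mem_take_get hprev
    have hwz := U_mem hwU
    apply IH j hji hj (fun k hk hlt => Hno k hk (lt_trans hlt hji))
    · rw [hEq]
      exact ⟨Finset.mem_insert_of_mem htaut.1, Finset.mem_insert_of_mem htaut.2⟩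
    · rw [hEq]
      intro l hl
      rcases Finset.mem_insert.mp hl with rfl | h
      · rw [hwz]; rfl
      · exact hnoTS l h
    · rw [hEq]
      intro l hl hlz
      rcases Finset.mem_insert.mp hl with rfl | h
      · exact absurd hwz hlz
      · exact hFal l h hlz
  · have hxz : x ≠ PVar.z := fun h => z_notE (h ▸ hxE)
    obtain ⟨jE, hjE, hjiE, hEqE⟩ := mem_take_get hpE
    obtain ⟨jF, hjF, hjiF, hEqF⟩ := mem_take_get hpF
    have hsubE : Ec ⊆ π.get ⟨i, hi⟩ := by rw [hCeq]; exact Finset.subset_union_left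
    have hsubF : Fc ⊆ π.get ⟨i, hi⟩ := by rw [hCeq]; exact Finset.subset_union_right
    rcases E_cases hxE with ⟨jx, hjx1, hjx2, rfl⟩ | ⟨m, hm1, hm2, rfl⟩ | ⟨m, hm1, hm2, rfl⟩
    · -- pivot is an x-variable: the falsified premise is an earlier trigger or earlier taut
      have hxz' : PVar.x jx ≠ PVar.z := by simp
      by_cases hu : canVal α (PVar.x jx) = true
      · have hFalP : Fal α (insert (⟨PVar.x jx, false⟩ : Lit PVar) Ec) :=
          fal_premise hFal hsubE (by simp [hu])
        have hnoP : noTS (insert (⟨PVar.x jx, false⟩ : Lit PVar) Ec) :=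
          nots_premise hnoTS hsubE (by simp [isTSb])
        by_cases htP : zTaut (insert (⟨PVar.x jx, false⟩ : Lit PVar) Ec)
        · exact IH jE hjiE hjE (fun k hk hlt => Hno k hk (lt_trans hlt hjiE))
            (by rw [hEqE]; exact htP) (by rw [hEqE]; exact hnoP) (by rw [hEqE]; exact hFalP)
        · exact Hno jE hjE hjiE (by rw [hEqE]; exact ⟨htP, hnoP, hFalP⟩)
      · have hu' : canVal α (PVar.x jx) = false := by
          cases h : canVal α (PVar.x jx)
          · rfl
          · exact absurd h hu
        have hFalP : Fal α (insert (⟨PVar.x jx, true⟩ : Lit PVar) Fc) :=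
          fal_premise hFal hsubF (by simp [hu'])
        have hnoP : noTS (insert (⟨PVar.x jx, true⟩ : Lit PVar) Fc) :=
          nots_premise hnoTS hsubF (by simp [isTSb])
        by_cases htP : zTaut (insert (⟨PVar.x jx, true⟩ : Lit PVar) Fc)
        · exact IH jF hjiF hjF (fun k hk hlt => Hno k hk (lt_trans hlt hjiF))
            (by rw [hEqF]; exact htP) (by rw [hEqF]; exact hnoP) (by rw [hEqF]; exact hFalP)
        · exact Hno jF hjF hjiF (by rw [hEqF]; exact ⟨htP, hnoP, hFalP⟩)
    · -- pivot is a t-variable: blocked merge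
      have hJ1E : J1 (insert (⟨PVar.t m, false⟩ : Lit PVar) Ec) := by
        have := (goodAll hN hp jE hjE).2
        rwa [hEqE] at this
      have hJ1F : J1 (insert (⟨PVar.t m, true⟩ : Lit PVar) Fc) := by
        have := (goodAll hN hp jF hjF).2
        rwa [hEqF] at this
      have htz : PVar.t m ≠ PVar.z := by simp
      have hzp := htaut.1
      have hzn := htaut.2
      rw [hCeq] at hzp hzn
      rcases Finset.mem_union.mp hzp with hzpE | hzpF <;>
        rcases Finset.mem_union.mp hzn with hznE | hznF
      · -- both in Ec: z+ in Fc via J1 of F-premise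
        have hzF : (⟨PVar.z, true⟩ : Lit PVar) ∈ insert (⟨PVar.t m, true⟩ : Lit PVar) Fc :=
          hJ1F.1 m true (Finset.mem_insert_self _ _)
        have hzFc := zmem_of_premise hzF htz
        exact hside ⟨PVar.z, false⟩ hznE z_U hzFc D_t
      · exact hside ⟨PVar.z, true⟩ hzpE z_U hznF D_t
      · exact hside ⟨PVar.z, false⟩ hznE z_U hzpF D_t
      · -- both in Fc: z+ in Ec via J1 of E-premise
        have hzE : (⟨PVar.z, true⟩ : Lit PVar) ∈ insert (⟨PVar.t m, false⟩ : Lit PVar) Ec :=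
          hJ1E.1 m false (Finset.mem_insert_self _ _)
        have hzEc := zmem_of_premise hzE htz
        exact hside ⟨PVar.z, true⟩ hzEc z_U hznF D_t
    · -- pivot is an s-variable: blocked merge
      have hJ1E : J1 (insert (⟨PVar.s m, false⟩ : Lit PVar) Ec) := by
        have := (goodAll hN hp jE hjE).2
        rwa [hEqE] at this
      have hJ1F : J1 (insert (⟨PVar.s m, true⟩ : Lit PVar) Fc) := by
        have := (goodAll hN hp jF hjF).2
        rwa [hEqF] at this
      have htz : PVar.s m ≠ PVar.z := by simp
      have hzp := htaut.1
      have hzn := htaut.2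
      rw [hCeq] at hzp hzn
      rcases Finset.mem_union.mp hzp with hzpE | hzpF <;>
        rcases Finset.mem_union.mp hzn with hznE | hznF
      · -- both in Ec: z- in Fc via J1 of F-premise
        have hzF : (⟨PVar.z, false⟩ : Lit PVar) ∈ insert (⟨PVar.s m, true⟩ : Lit PVar) Fc :=
          hJ1F.2 m true (Finset.mem_insert_self _ _)
        have hzFc := zmem_of_premise hzF htz
        exact hside ⟨PVar.z, true⟩ hzpE z_U hzFc D_s
      · exact hside ⟨PVar.z, true⟩ hzpE z_U hznF D_s
      · exact hside ⟨PVar.z, false⟩ hznE z_U hzpF D_s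
      · have hzE : (⟨PVar.z, false⟩ : Lit PVar) ∈ insert (⟨PVar.s m, false⟩ : Lit PVar) Ec :=
          hJ1E.2 m false (Finset.mem_insert_self _ _)
        have hzEc := zmem_of_premise hzE htz
        exact hside ⟨PVar.z, false⟩ hzEc z_U hzpF D_s

end TsRed
namespace TsRed

lemma final {N : ℕ} {π : List (Clause PVar)} (hN : 2 ≤ N)
    (hp : IsLDQProof (tsLQParity N) (Dtrv (tsLQParity N)) π) (α : ℕ → Bool)
    (i : ℕ) (hi : i < π.length) (ht : TRIG α (π.get ⟨i, hi⟩))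
    (hmin : ∀ j (hj : j < π.length), j < i → ¬ TRIG α (π.get ⟨j, hj⟩)) :
    (⟨PVar.z, !(pref α N)⟩ : Lit PVar) ∈ π.get ⟨i, hi⟩ := by
  obtain ⟨hnt, hnoTS, hFal⟩ := ht
  rcases hp ⟨i, hi⟩ with hax | ⟨w, hwU, hwC, hprev, hcond⟩ |
    ⟨x, Ec, Fc, hxE, hCeq, hnE, hnF, hpE, hpF, hside⟩
  · exact matrix_M4 hax α hFal
  · -- reduction: the premise is an earlier trigger or earlier x-only tautology
    obtain ⟨j, hj, hji, hEq⟩ := mem_take_get hprev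
    have hwz := U_mem hwU
    have hnoP : noTS (insert w (π.get ⟨i, hi⟩)) := by
      intro l hl
      rcases Finset.mem_insert.mp hl with rfl | h
      · rw [hwz]; rfl
      · exact hnoTS l h
    have hFalP : Fal α (insert w (π.get ⟨i, hi⟩)) := by
      intro l hl hlz
      rcases Finset.mem_insert.mp hl with rfl | h
      · exact absurd hwz hlz
      · exact hFal l h hlz
    by_cases htP : zTaut (insert w (π.get ⟨i, hi⟩))
    · exact absurd (tex hN hp α j hj (fun k hk hlt => hmin k hk (lt_trans hlt hji))
        (by rw [hEq]; exact htP) (by rw [hEq]; exact hnoP) (by rw [hEq]; exact hFalP)) id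
    · exact absurd (hmin j hj hji (by rw [hEq]; exact ⟨htP, hnoP, hFalP⟩)) id
  · have hxz : x ≠ PVar.z := fun h => z_notE (h ▸ hxE)
    obtain ⟨jE, hjE, hjiE, hEqE⟩ := mem_take_get hpE
    obtain ⟨jF, hjF, hjiF, hEqF⟩ := mem_take_get hpF
    have hsubE : Ec ⊆ π.get ⟨i, hi⟩ := by rw [hCeq]; exact Finset.subset_union_left
    have hsubF : Fc ⊆ π.get ⟨i, hi⟩ := by rw [hCeq]; exact Finset.subset_union_right
    rcases E_cases hxE with ⟨jx, hjx1, hjx2, rfl⟩ | ⟨m, hm1, hm2, rfl⟩ | ⟨m, hm1, hm2, rfl⟩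
    · -- x-pivot: earlier trigger, contradiction
      exfalso
      by_cases hu : canVal α (PVar.x jx) = true
      · have hFalP : Fal α (insert (⟨PVar.x jx, false⟩ : Lit PVar) Ec) :=
          fal_premise hFal hsubE (by simp [hu])
        have hnoP : noTS (insert (⟨PVar.x jx, false⟩ : Lit PVar) Ec) :=
          nots_premise hnoTS hsubE (by simp [isTSb])
        have hntP : ¬ zTaut (insert (⟨PVar.x jx, false⟩ : Lit PVar) Ec) :=
          nt_premise hnt hsubE (by simp)
        exact hmin jE hjE hjiE (by rw [hEqE]; exact ⟨hntP, hnoP, hFalP⟩)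
      · have hu' : canVal α (PVar.x jx) = false := by
          cases h : canVal α (PVar.x jx)
          · rfl
          · exact absurd h hu
        have hFalP : Fal α (insert (⟨PVar.x jx, true⟩ : Lit PVar) Fc) :=
          fal_premise hFal hsubF (by simp [hu'])
        have hnoP : noTS (insert (⟨PVar.x jx, true⟩ : Lit PVar) Fc) :=
          nots_premise hnoTS hsubF (by simp [isTSb])
        have hntP : ¬ zTaut (insert (⟨PVar.x jx, true⟩ : Lit PVar) Fc) :=
          nt_premise hnt hsubF (by simp)
        exact hmin jF hjF hjiF (by rw [hEqF]; exact ⟨hntP, hnoP, hFalP⟩)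
    · -- t-pivot: use STAR on the falsified premise
      have htz : PVar.t m ≠ PVar.z := by simp
      by_cases hu : canVal α (PVar.t m) = true
      · have hFalP : Fal α (insert (⟨PVar.t m, false⟩ : Lit PVar) Ec) :=
          fal_premise hFal hsubE (by simp [hu])
        have hntP : ¬ zTaut (insert (⟨PVar.t m, false⟩ : Lit PVar) Ec) :=
          nt_premise hnt hsubE htz
        have hz := star hN hp α jE hjE
          (fun k hk hle => hmin k hk (lt_of_le_of_lt hle hjiE))
          (by rw [hEqE]; exact hFalP) (by rw [hEqE]; exact hntP)
        rw [hEqE] at hz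
        exact hsubE (zmem_of_premise hz htz)
      · have hu' : canVal α (PVar.t m) = false := by
          cases h : canVal α (PVar.t m)
          · rfl
          · exact absurd h hu
        have hFalP : Fal α (insert (⟨PVar.t m, true⟩ : Lit PVar) Fc) :=
          fal_premise hFal hsubF (by simp [hu'])
        have hntP : ¬ zTaut (insert (⟨PVar.t m, true⟩ : Lit PVar) Fc) :=
          nt_premise hnt hsubF htz
        have hz := star hN hp α jF hjF
          (fun k hk hle => hmin k hk (lt_of_le_of_lt hle hjiF))
          (by rw [hEqF]; exact hFalP) (by rw [hEqF]; exact hntP)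
        rw [hEqF] at hz
        exact hsubF (zmem_of_premise hz htz)
    · -- s-pivot
      have htz : PVar.s m ≠ PVar.z := by simp
      by_cases hu : canVal α (PVar.s m) = true
      · have hFalP : Fal α (insert (⟨PVar.s m, false⟩ : Lit PVar) Ec) :=
          fal_premise hFal hsubE (by simp [hu])
        have hntP : ¬ zTaut (insert (⟨PVar.s m, false⟩ : Lit PVar) Ec) :=
          nt_premise hnt hsubE htz
        have hz := star hN hp α jE hjE
          (fun k hk hle => hmin k hk (lt_of_le_of_lt hle hjiE))
          (by rw [hEqE]; exact hFalP) (by rw [hEqE]; exact hntP)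
        rw [hEqE] at hz
        exact hsubE (zmem_of_premise hz htz)
      · have hu' : canVal α (PVar.s m) = false := by
          cases h : canVal α (PVar.s m)
          · rfl
          · exact absurd h hu
        have hFalP : Fal α (insert (⟨PVar.s m, true⟩ : Lit PVar) Fc) :=
          fal_premise hFal hsubF (by simp [hu'])
        have hntP : ¬ zTaut (insert (⟨PVar.s m, true⟩ : Lit PVar) Fc) :=
          nt_premise hnt hsubF htz
        have hz := star hN hp α jF hjF
          (fun k hk hle => hmin k hk (lt_of_le_of_lt hle hjiF))
          (by rw [hEqF]; exact hFalP) (by rw [hEqF]; exact hntP)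
        rw [hEqF] at hz
        exact hsubF (zmem_of_premise hz htz)

end TsRed
namespace TsRed

def xcube (C : Clause PVar) : PCube :=
  C.biUnion (fun l => match l.var with
    | PVar.x j => {(j, !l.pos)}
    | _ => (∅ : Finset (ℕ × Bool)))

instance (C : Clause PVar) : Decidable (zTaut C) := by unfold zTaut; infer_instance
instance (C : Clause PVar) : Decidable (noTS C) := by unfold noTS; infer_instance

def cubeOf (C : Clause PVar) : PCube :=
  if ¬ zTaut C ∧ noTS C then xcube C else {(1, true), (1, false)}

def outOf (C : Clause PVar) : Bool := decide ((⟨PVar.z, false⟩ : Lit PVar) ∈ C)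

lemma matches_cubeOf {N : ℕ} {α : ℕ → Bool} {C : Clause PVar} (hJ0 : J0 N C) :
    Matches α (cubeOf C) ↔ TRIG α C := by
  unfold cubeOf
  by_cases hsh : ¬ zTaut C ∧ noTS C
  · rw [if_pos hsh]
    constructor
    · intro hM
      refine ⟨hsh.1, hsh.2, ?_⟩
      intro l hl hlz
      have hleg := hJ0 l hl
      have hts := hsh.2 l hl
      cases hv : l.var with
      | x j =>
        have hmem : (j, !l.pos) ∈ xcube C := by
          apply Finset.mem_biUnion.mpr
          exact ⟨l, hl, by rw [hv]; simp⟩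
        have := hM _ hmem
        simp only at this
        simp only [canVal, this]
        cases l.pos <;> simp
      | t m => rw [hv] at hts; simp [isTSb] at hts
      | s m => rw [hv] at hts; simp [isTSb] at hts
      | z => exact absurd hv hlz
      | b => rw [hv] at hleg; simp [legalVar] at hleg
    · rintro ⟨-, -, hF⟩
      intro p hp
      obtain ⟨l, hl, hm⟩ := Finset.mem_biUnion.mp hp
      cases hv : l.var with
      | x j =>
        rw [hv] at hm
        simp only [Finset.mem_singleton] at hm
        subst hm
        have := hF l hl (by rw [hv]; simp)
        rw [hv] at this
        simp only [canVal] at this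
        simp only
        cases h : α j
        · cases hlp : l.pos
          · rw [h, hlp] at this; exact absurd rfl this
          · simp [hlp]
        · cases hlp : l.pos
          · simp [hlp]
          · rw [h, hlp] at this; exact absurd rfl this
      | t m => rw [hv] at hm; simp at hm
      | s m => rw [hv] at hm; simp at hm
      | z => rw [hv] at hm; simp at hm
      | b => rw [hv] at hm; simp at hm
  · rw [if_neg hsh]
    constructor
    · intro hM
      have h1 := hM (1, true) (by simp)
      have h2 := hM (1, false) (by simp)
      simp only at h1 h2
      rw [h1] at h2
      exact absurd h2 (by simp)
    · rintro ⟨h1, h2, -⟩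
      exact absurd ⟨h1, h2⟩ hsh

lemma main_bound {N : ℕ} {π : List (Clause PVar)} (hN : 4 ≤ N)
    (href : IsLDQRefutation (tsLQParity N) (Dtrv (tsLQParity N)) π) :
    16^(N/4) ≤ 15^(N/4) * (π.length + 1) := by
  obtain ⟨hp, hemp⟩ := href
  have hN2 : 2 ≤ N := by omega
  set f : Clause PVar → PCube × Bool := fun C => (cubeOf C, outOf C) with hf
  set Lc := π.map f with hLc
  have hlen : Lc.length = π.length := List.length_map _
  have hget : ∀ (i : Fin Lc.length), Lc.get i =
      f (π.get ⟨i.1, by omega⟩) := by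
    intro i
    have h : Lc.get i = f (π.get ⟨i.1, by omega⟩) := by simp [hLc]
    rw [h]
  have hJ : ∀ (i : ℕ) (h : i < π.length), J0 N (π.get ⟨i, h⟩) :=
    fun i h => (goodAll hN2 hp i h).1
  have hbound := cube_lower Lc N hN ?hvars ?hcov ?hpure
  · rw [hlen] at hbound
    exact hbound
  case hvars =>
    intro e he p hpe
    obtain ⟨C, hC, rfl⟩ := List.mem_map.mp he
    obtain ⟨k, hk⟩ := List.mem_iff_get.mp hC
    have hJ0 : J0 N C := by rw [← hk]; exact hJ k.1 k.2
    simp only [hf] at hpe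
    by_cases hsh : ¬ zTaut C ∧ noTS C
    · rw [cubeOf, if_pos hsh] at hpe
      obtain ⟨l, hl, hm⟩ := Finset.mem_biUnion.mp hpe
      have hleg := hJ0 l hl
      cases hv : l.var with
      | x j =>
        rw [hv] at hm
        simp only [Finset.mem_singleton] at hm
        subst hm
        rw [hv] at hleg
        simp only [legalVar] at hleg
        simp only [Finset.mem_Icc]
        exact hleg
      | t m => rw [hv] at hm; simp at hm
      | s m => rw [hv] at hm; simp at hm
      | z => rw [hv] at hm; simp at hm
      | b => rw [hv] at hm; simp at hm
    · rw [cubeOf, if_neg hsh] at hpe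
      simp only [Finset.mem_insert, Finset.mem_singleton] at hpe
      rcases hpe with rfl | rfl <;> (simp only [Finset.mem_Icc]; omega)
  case hcov =>
    intro α
    obtain ⟨k, hk⟩ := List.mem_iff_get.mp hemp
    have hkL : k.1 < Lc.length := by omega
    refine ⟨⟨k.1, hkL⟩, ?_⟩
    rw [hget ⟨k.1, hkL⟩]
    have hEq : π.get ⟨(⟨k.1, hkL⟩ : Fin Lc.length).1, by omega⟩ = (∅ : Clause PVar) := by
      have h2 : (⟨(⟨k.1, hkL⟩ : Fin Lc.length).1, by omega⟩ : Fin π.length) = k := Fin.ext rfl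
      rw [h2, hk]
    show Matches α (cubeOf (π.get ⟨(⟨k.1, hkL⟩ : Fin Lc.length).1, by omega⟩))
    apply (matches_cubeOf (N := N) ?_).mpr
    · rw [hEq]
      refine ⟨?_, ?_, ?_⟩
      · rintro ⟨h, -⟩; simp at h
      · intro l hl; simp at hl
      · intro l hl; simp at hl
    · rw [hEq]; intro l hl; simp at hl
  case hpure =>
    intro α i hM hfirst
    have hi' : i.1 < π.length := by omega
    rw [hget i] at hM
    simp only [hf] at hM
    have hTRIG : TRIG α (π.get ⟨i.1, hi'⟩) := (matches_cubeOf (hJ i.1 hi')).mp hM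
    have hmin : ∀ j (hj : j < π.length), j < i.1 → ¬ TRIG α (π.get ⟨j, hj⟩) := by
      intro j hj hji hT
      have hMM : Matches α (Lc.get ⟨j, by omega⟩).1 := by
        rw [hget ⟨j, by omega⟩]
        exact (matches_cubeOf (hJ j hj)).mpr hT
      exact hfirst ⟨j, by omega⟩ (by simp [Fin.lt_def]; omega) hMM
    have hz := final hN2 hp α i.1 hi' hTRIG hmin
    rw [hget i]
    show pref α N = outOf (π.get ⟨i.1, hi'⟩)
    unfold outOf
    cases hb : pref α N
    · rw [hb] at hz
      simp only [Bool.not_false] at hz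
      have hnf : (⟨PVar.z, false⟩ : Lit PVar) ∉ π.get ⟨i.1, hi'⟩ := fun hm => hTRIG.1 ⟨hz, hm⟩
      symm
      simp only [decide_eq_false_iff_not]
      exact hnf
    · rw [hb] at hz
      simp only [Bool.not_true] at hz
      symm
      simp only [decide_eq_true_eq]
      exact hz

end TsRed
namespace TsRed

lemma sqrt_aux (u : ℝ) (hu : 0 ≤ u) : u ^ ((1:ℝ)/2) ≤ u/64 + 16 := by
  have h1 : u ^ ((1:ℝ)/2) = Real.sqrt u := (Real.sqrt_eq_rpow u).symm
  rw [h1]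
  nlinarith [sq_nonneg (Real.sqrt u - 32), Real.sq_sqrt hu, Real.sqrt_nonneg u]

lemma pow_inv16 : (2:ℝ) ^ ((1:ℝ)/16) ≤ 16/15 := by
  have h0 : (0:ℝ) ≤ 2 ^ ((1:ℝ)/16) := le_of_lt (Real.rpow_pos_of_pos two_pos _)
  have h1 : ((2:ℝ) ^ ((1:ℝ)/16)) ^ (16:ℕ) = 2 := by
    rw [← Real.rpow_natCast ((2:ℝ) ^ ((1:ℝ)/16)) 16, ← Real.rpow_mul (by norm_num)]
    norm_num
  have h2 : ((16:ℝ)/15) ^ (16:ℕ) ≥ 2 := by norm_num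
  have := (pow_le_pow_iff_left₀ h0 (by norm_num : (0:ℝ) ≤ 16/15) (by norm_num : (16:ℕ) ≠ 0)).mp
    (by rw [h1]; exact h2)
  exact this

theorem lower_final {N : ℕ} {π : List (Clause PVar)} (hN : 2 ≤ N)
    (href : IsLDQRefutation (tsLQParity N) (Dtrv (tsLQParity N)) π) :
    (2:ℝ)^(-(18:ℝ)) * (2:ℝ) ^ ((N:ℝ) ^ ((1:ℝ)/2)) ≤ (π.length : ℝ) := by
  have hlen1 : 1 ≤ π.length := by
    rcases π with _ | ⟨a, l⟩
    · exact absurd href.2 (by simp)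
    · simp
  have hkey : (2:ℝ)^(-(18:ℝ)) * (2:ℝ) ^ ((N:ℝ) ^ ((1:ℝ)/2)) =
      (2:ℝ) ^ ((N:ℝ) ^ ((1:ℝ)/2) - 18) := by
    rw [← Real.rpow_add two_pos]
    ring_nf
  rw [hkey]
  rcases Nat.lt_or_ge N 4 with hN4 | hN4
  · -- small N: bound by 1
    have hs : (N:ℝ) ^ ((1:ℝ)/2) ≤ (N:ℝ) := by
      have := Real.rpow_le_rpow_of_exponent_le
        (by exact_mod_cast Nat.one_le_cast.mpr (by omega) : (1:ℝ) ≤ (N:ℝ))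
        (by norm_num : (1:ℝ)/2 ≤ 1)
      simpa using this
    have hNle : (N:ℝ) ≤ 3 := by exact_mod_cast Nat.le_of_lt_succ hN4
    have : (2:ℝ) ^ ((N:ℝ) ^ ((1:ℝ)/2) - 18) ≤ (2:ℝ) ^ (0:ℝ) := by
      apply Real.rpow_le_rpow_of_exponent_le (by norm_num)
      nlinarith
    rw [Real.rpow_zero] at this
    calc (2:ℝ) ^ ((N:ℝ) ^ ((1:ℝ)/2) - 18) ≤ 1 := this
    _ ≤ (π.length : ℝ) := by exact_mod_cast hlen1
  · -- big N
    have hmb := main_bound hN4 href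
    set q := N / 4 with hq
    -- real versions
    have h15 : (0:ℝ) < 15 := by norm_num
    have hcast : ((16:ℝ))^q ≤ (15:ℝ)^q * ((π.length : ℝ) + 1) := by
      have := hmb
      have hc : ((16^q : ℕ) : ℝ) ≤ ((15^q * (π.length + 1) : ℕ) : ℝ) := by exact_mod_cast this
      push_cast at hc
      convert hc using 2 <;> norm_num
    have hquot : ((16:ℝ)/15)^q ≤ (π.length : ℝ) + 1 := by
      rw [div_pow]
      rw [div_le_iff₀ (by positivity)]
      calc (16:ℝ)^q ≤ (15:ℝ)^q * ((π.length : ℝ) + 1) := hcast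
      _ = ((π.length : ℝ) + 1) * 15^q := by ring
    have hp2 : (2:ℝ) ^ ((q:ℝ)/16) ≤ ((16:ℝ)/15)^q := by
      have hbase := pow_inv16
      have h0 : (0:ℝ) ≤ 2 ^ ((1:ℝ)/16) := le_of_lt (Real.rpow_pos_of_pos two_pos _)
      have hmono : ((2:ℝ) ^ ((1:ℝ)/16))^q ≤ ((16:ℝ)/15)^q := pow_le_pow_left₀ h0 hbase q
      have heq : ((2:ℝ) ^ ((1:ℝ)/16))^q = (2:ℝ) ^ ((q:ℝ)/16) := by
        rw [← Real.rpow_natCast ((2:ℝ) ^ ((1:ℝ)/16)) q, ← Real.rpow_mul (by norm_num)]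
        ring_nf
      rwa [heq] at hmono
    have hsum : (2:ℝ) ^ ((q:ℝ)/16) ≤ 2 * (π.length : ℝ) := by
      calc (2:ℝ) ^ ((q:ℝ)/16) ≤ (π.length : ℝ) + 1 := le_trans hp2 hquot
      _ ≤ 2 * (π.length : ℝ) := by
          have : (1:ℝ) ≤ (π.length : ℝ) := by exact_mod_cast hlen1
          linarith
    -- exponent comparison
    have hqN : (N:ℝ) - 3 ≤ 4 * (q:ℝ) := by
      have : N - 3 ≤ 4 * q := by omega
      have h2 : ((N - 3 : ℕ) : ℝ) ≤ ((4 * q : ℕ) : ℝ) := by exact_mod_cast this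
      push_cast at h2
      have h3 : ((N:ℝ) - 3) ≤ ((N - 3 : ℕ) : ℝ) := by
        push_cast [Nat.cast_sub (by omega : 3 ≤ N)]
        linarith
      linarith
    have hexp : (N:ℝ) ^ ((1:ℝ)/2) - 18 ≤ (q:ℝ)/16 - 1 := by
      have hs := sqrt_aux (N:ℝ) (by positivity)
      nlinarith
    have hfin : (2:ℝ) ^ ((N:ℝ) ^ ((1:ℝ)/2) - 18) ≤ (2:ℝ) ^ ((q:ℝ)/16 - 1) :=
      Real.rpow_le_rpow_of_exponent_le (by norm_num) hexp
    have hhalf : (2:ℝ) ^ ((q:ℝ)/16 - 1) ≤ (π.length : ℝ) := by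
      rw [Real.rpow_sub two_pos, Real.rpow_one]
      rw [div_le_iff₀ (by norm_num : (0:ℝ) < 2)]
      linarith [hsum]
    exact le_trans hfin hhalf

end TsRed

/-- Exponential LDQ-Res lower bound for ts-LQParity. There are
`c, ε > 0` such that every LDQ(D^trv)-Res refutation of ts-LQParity(N) has size at
least `c · 2^(N^ε)`, for all `N ≥ 2`. -/
theorem ts_lqparity_ldq_lower_bound : ∃ c ε : ℝ, 0 < c ∧ 0 < ε ∧
    ∀ N : ℕ, 2 ≤ N → ∀ π : List (Clause PVar),
      IsLDQRefutation (tsLQParity N) (Dtrv (tsLQParity N)) π →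
      c * (2 : ℝ) ^ ((N : ℝ) ^ ε) ≤ (π.length : ℝ) := by
  refine ⟨(2:ℝ)^(-(18:ℝ)), (1:ℝ)/2, Real.rpow_pos_of_pos two_pos _, by norm_num, ?_⟩
  intro N hN π href
  exact TsRed.lower_final hN href
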